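/- Let ρ be a set partition of [r] and a a weak composition of r such that the stabilizer S_a^ρ = {σ ∈ S_a : σ·ρ = ρ} is defined. Then S_a^ρ factors as a product S_a^ρ = X_a^ρ Y_a^ρ, where Y_a^ρ is the normal subgroup of permutations that fix each block of ρ setwise (permuting only within blocks) and X_a^ρ is a subgroup permuting whole blocks, and X_a^ρ ∩ Y_a^ρ = {1}; in particular |S_a^ρ| = |X_a^ρ| · |Y_a^ρ|. -/

import Mathlib

open Finset

variable {r k : ℕ}

/-- The stabilizer `S_a^ρ = {σ ∈ S_a : σ·ρ = ρ}` of a set partition `ρ` of `[r]` inside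
the Young subgroup `S_a` (the stabilizer of the coloring map `c`), acting by relabeling
elements. -/
def stab (c : Fin r → Fin k) (P : Finpartition (univ : Finset (Fin r))) :
    Set (Equiv.Perm (Fin r)) :=
  {σ | c ∘ ⇑σ = c ∧ P.parts.image (fun B => B.image ⇑σ) = P.parts}

/-- `Y_a^ρ` : the elements of the stabilizer fixing every block of `ρ` setwise
(permuting only within blocks). -/
def yGrp (c : Fin r → Fin k) (P : Finpartition (univ : Finset (Fin r))) :
    Set (Equiv.Perm (Fin r)) :=
  {σ ∈ stab c P | ∀ B ∈ P.parts, B.image ⇑σ = B}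

/-- `X_a^ρ` : the elements of the stabilizer mapping each block of `ρ` onto a block of
`ρ` by an order-preserving bijection (permuting whole blocks). -/
def xGrp (c : Fin r → Fin k) (P : Finpartition (univ : Finset (Fin r))) :
    Set (Equiv.Perm (Fin r)) :=
  {σ ∈ stab c P | ∀ B ∈ P.parts, MonotoneOn ⇑σ ↑B}

section helpers

variable (P : Finpartition (univ : Finset (Fin r))) (σ : Equiv.Perm (Fin r))

/-- The monotone rearrangement of `σ` on the block `B`. -/
noncomputable def intoFun (B : Finset (Fin r)) (σ : Equiv.Perm (Fin r)) (i : Fin r)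
    (hi : i ∈ B) : Fin r :=
  (B.image ⇑σ).orderEmbOfFin (Finset.card_image_of_injective _ σ.injective)
    ((B.orderIsoOfFin rfl).symm ⟨i, hi⟩)

lemma intoFun_congr {B C : Finset (Fin r)} (h : B = C) (i : Fin r) (hi : i ∈ B) :
    intoFun B σ i hi = intoFun C σ i (h ▸ hi) := by subst h; rfl

/-- The global monotone rearrangement of `σ`. -/
noncomputable def xFun (i : Fin r) : Fin r :=
  intoFun (P.part i) σ i (P.mem_part (mem_univ i))

lemma xFun_eq_intoFun {B : Finset (Fin r)} (hB : B ∈ P.parts) {i : Fin r} (hi : i ∈ B) :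
    xFun P σ i = intoFun B σ i hi := by
  have h : P.part i = B := P.part_eq_of_mem hB hi
  rw [xFun, intoFun_congr σ h]

lemma xFun_mem {B : Finset (Fin r)} (hB : B ∈ P.parts) {i : Fin r} (hi : i ∈ B) :
    xFun P σ i ∈ B.image ⇑σ := by
  rw [xFun_eq_intoFun P σ hB hi, intoFun]
  exact Finset.orderEmbOfFin_mem _ _ _

lemma xFun_strictMonoOn {B : Finset (Fin r)} (hB : B ∈ P.parts) :
    StrictMonoOn (xFun P σ) ↑B := by
  intro i hi j hj hij
  rw [xFun_eq_intoFun P σ hB hi, xFun_eq_intoFun P σ hB hj, intoFun, intoFun]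
  exact (B.image ⇑σ).orderEmbOfFin _ |>.strictMono <|
    ((B.orderIsoOfFin rfl).symm).strictMono (show (⟨i, hi⟩ : B) < ⟨j, hj⟩ from hij)

lemma image_xFun {B : Finset (Fin r)} (hB : B ∈ P.parts) :
    B.image (xFun P σ) = B.image ⇑σ := by
  apply Finset.eq_of_subset_of_card_le
  · intro x hx
    obtain ⟨i, hi, rfl⟩ := Finset.mem_image.1 hx
    exact xFun_mem P σ hB hi
  · rw [Finset.card_image_of_injective _ σ.injective,
      Finset.card_image_of_injOn (xFun_strictMonoOn P σ hB).injOn]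

/-- uniqueness of monotone maps with given domain & image -/
lemma eqOn_of_strictMonoOn {f g : Fin r → Fin r} {B : Finset (Fin r)}
    (hf : StrictMonoOn f ↑B) (hg : StrictMonoOn g ↑B) (h : B.image f = B.image g)
    {i : Fin r} (hi : i ∈ B) : f i = g i := by
  have hcf : (B.image f).card = B.card := Finset.card_image_of_injOn hf.injOn
  have hcg : (B.image g).card = B.card := Finset.card_image_of_injOn hg.injOn
  set e := B.orderEmbOfFin rfl with he
  have hfe : f ∘ e = (B.image g).orderEmbOfFin hcg := by
    apply Finset.orderEmbOfFin_unique
    · exact fun t => h ▸ Finset.mem_image_of_mem f (Finset.orderEmbOfFin_mem _ _ _)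
    · exact fun a b hab => hf (Finset.orderEmbOfFin_mem _ _ _)
        (Finset.orderEmbOfFin_mem _ _ _) (e.strictMono hab)
  have hge : g ∘ e = (B.image g).orderEmbOfFin hcg := by
    apply Finset.orderEmbOfFin_unique
    · exact fun t => Finset.mem_image_of_mem g (Finset.orderEmbOfFin_mem _ _ _)
    · exact fun a b hab => hg (Finset.orderEmbOfFin_mem _ _ _)
        (Finset.orderEmbOfFin_mem _ _ _) (e.strictMono hab)
  have : f ∘ e = g ∘ e := by rw [hfe, hge]
  have hrange : i ∈ Set.range e := by rw [he, Finset.range_orderEmbOfFin]; exact hi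
  obtain ⟨t, rfl⟩ := hrange
  exact congrFun this t



lemma sorted_color (c : Fin r → Fin k) (hc : Monotone c) {B B' : Finset (Fin r)}
    (h : Multiset.map c B.val = Multiset.map c B'.val) {n : ℕ}
    (hB : B.card = n) (hB' : B'.card = n) (t : Fin n) :
    c (B.orderEmbOfFin hB t) = c (B'.orderEmbOfFin hB' t) := by
  have hL : List.map c (B.sort (· ≤ ·)) = List.map c (B'.sort (· ≤ ·)) := by
    apply fun (hp : List.Perm (List.map c (B.sort (· ≤ ·))) (List.map c (B'.sort (· ≤ ·)))) h1 h2 =>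
      List.Perm.eq_of_pairwise' (r := (· ≤ ·)) h1 h2 hp
    · rw [← Multiset.coe_eq_coe, ← Multiset.map_coe, ← Multiset.map_coe,
        Finset.sort_eq, Finset.sort_eq, h]
    · exact List.Pairwise.map c (fun a b hab => hc hab) (B.pairwise_sort (· ≤ ·))
    · exact List.Pairwise.map c (fun a b hab => hc hab) (B'.pairwise_sort (· ≤ ·))
  have h1 : c (B.orderEmbOfFin hB t) =
      (List.map c (B.sort (· ≤ ·)))[(t : ℕ)]'(by
        rw [List.length_map, Finset.length_sort, hB]; exact t.2) := by
    simp [Finset.orderEmbOfFin_apply]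
  have h2 : c (B'.orderEmbOfFin hB' t) =
      (List.map c (B'.sort (· ≤ ·)))[(t : ℕ)]'(by
        rw [List.length_map, Finset.length_sort, hB']; exact t.2) := by
    simp [Finset.orderEmbOfFin_apply]
  rw [h1, h2]
  congr 1

lemma colors_image (c : Fin r → Fin k) {B : Finset (Fin r)} (σ : Equiv.Perm (Fin r))
    (hcσ : c ∘ ⇑σ = c) :
    Multiset.map c (B.image ⇑σ).val = Multiset.map c B.val := by
  rw [Finset.image_val_of_injOn (σ.injective.injOn), Multiset.map_map, hcσ]

lemma c_intoFun (c : Fin r → Fin k) (hc : Monotone c) {B : Finset (Fin r)}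
    (σ : Equiv.Perm (Fin r)) (hcσ : c ∘ ⇑σ = c) {i : Fin r} (hi : i ∈ B) :
    c ((B.image ⇑σ).orderEmbOfFin (Finset.card_image_of_injective _ σ.injective)
      ((B.orderIsoOfFin rfl).symm ⟨i, hi⟩)) = c i := by
  rw [sorted_color c hc (colors_image c σ hcσ)
    (Finset.card_image_of_injective _ σ.injective) rfl]
  have : B.orderEmbOfFin rfl ((B.orderIsoOfFin rfl).symm ⟨i, hi⟩) = i := by
    rw [← Finset.coe_orderIsoOfFin_apply, OrderIso.apply_symm_apply]
  rw [this]

lemma c_xFun (c : Fin r → Fin k) (hc : Monotone c) (P : Finpartition (univ : Finset (Fin r)))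
    (σ : Equiv.Perm (Fin r)) (hcσ : c ∘ ⇑σ = c) (i : Fin r) :
    c (xFun P σ i) = c i :=
  c_intoFun c hc σ hcσ (P.mem_part (mem_univ i))

lemma inv_comp_self (σ : Equiv.Perm (Fin r)) : ⇑σ⁻¹ ∘ ⇑σ = id :=
  funext fun i => σ.symm_apply_apply i

lemma image_image_inv (σ : Equiv.Perm (Fin r)) (B : Finset (Fin r)) :
    (B.image ⇑σ).image ⇑σ⁻¹ = B := by
  rw [Finset.image_image, inv_comp_self, Finset.image_id]

lemma xFun_leftInv (P : Finpartition (univ : Finset (Fin r))) (σ : Equiv.Perm (Fin r))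
    (h1 : ∀ B ∈ P.parts, B.image ⇑σ ∈ P.parts) (i : Fin r) :
    xFun P σ⁻¹ (xFun P σ i) = i := by
  set B := P.part i with hBdef
  have hB : B ∈ P.parts := P.part_mem.2 (mem_univ i)
  have hB' : B.image ⇑σ ∈ P.parts := h1 B hB
  have hmono : StrictMonoOn (xFun P σ⁻¹ ∘ xFun P σ) ↑B := fun a ha b hb hab =>
    xFun_strictMonoOn P σ⁻¹ hB' (xFun_mem P σ hB ha) (xFun_mem P σ hB hb)
      (xFun_strictMonoOn P σ hB ha hb hab)
  have himg : B.image (xFun P σ⁻¹ ∘ xFun P σ) = B.image id := by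
    rw [← Finset.image_image, image_xFun P σ hB, image_xFun P σ⁻¹ hB',
      image_image_inv, Finset.image_id]
  exact eqOn_of_strictMonoOn hmono strictMonoOn_id himg (P.mem_part (mem_univ i))

lemma stab_parts {c : Fin r → Fin k} {P : Finpartition (univ : Finset (Fin r))}
    {σ : Equiv.Perm (Fin r)} (hσ : σ ∈ stab c P) {B : Finset (Fin r)} (hB : B ∈ P.parts) :
    B.image ⇑σ ∈ P.parts := hσ.2 ▸ Finset.mem_image_of_mem _ hB

lemma stab_parts_surj {c : Fin r → Fin k} {P : Finpartition (univ : Finset (Fin r))}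
    {σ : Equiv.Perm (Fin r)} (hσ : σ ∈ stab c P) {B : Finset (Fin r)} (hB : B ∈ P.parts) :
    ∃ C ∈ P.parts, C.image ⇑σ = B := by
  have := hσ.2.symm ▸ hB
  obtain ⟨C, hC, hCB⟩ := Finset.mem_image.1 this
  exact ⟨C, hC, hCB⟩

lemma stab_inv {c : Fin r → Fin k} {P : Finpartition (univ : Finset (Fin r))}
    {σ : Equiv.Perm (Fin r)} (hσ : σ ∈ stab c P) : σ⁻¹ ∈ stab c P := by
  constructor
  · funext j
    have := congrFun hσ.1 (σ⁻¹ j)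
    simpa using this.symm
  · apply Finset.eq_of_subset_of_card_le
    · intro B hBm
      obtain ⟨C, hC, rfl⟩ := Finset.mem_image.1 hBm
      obtain ⟨D, hD, rfl⟩ := stab_parts_surj hσ hC
      rwa [image_image_inv]
    · have : Set.InjOn (fun B : Finset (Fin r) => B.image ⇑σ⁻¹) ↑P.parts := by
        intro B1 h1 B2 h2 he
        have := congrArg (fun s : Finset (Fin r) => s.image ⇑σ) he
        simpa only [Finset.image_image, funext fun i => σ.apply_symm_apply i,
          show ⇑σ ∘ ⇑σ⁻¹ = id from funext fun i => σ.apply_symm_apply i,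
          Finset.image_id] using this
      rw [Finset.card_image_of_injOn this]

lemma fix_blocks_parts {P : Finpartition (univ : Finset (Fin r))} {τ : Equiv.Perm (Fin r)}
    (h : ∀ B ∈ P.parts, B.image ⇑τ = B) :
    P.parts.image (fun B => B.image ⇑τ) = P.parts := by
  rw [Finset.image_congr (fun B hB => h B hB)]; exact Finset.image_id

lemma perm_strictMonoOn {τ : Equiv.Perm (Fin r)} {B : Finset (Fin r)}
    (h : MonotoneOn ⇑τ ↑B) : StrictMonoOn ⇑τ ↑B := fun a ha b hb hab =>
  (h ha hb hab.le).lt_of_ne fun e => hab.ne (τ.injective e)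

lemma mul_mem_stab {c : Fin r → Fin k} {P : Finpartition (univ : Finset (Fin r))}
    {x y : Equiv.Perm (Fin r)} (hx : x ∈ xGrp c P) (hy : y ∈ yGrp c P) :
    x * y ∈ stab c P := by
  constructor
  · funext i
    have h1 := congrFun hx.1.1 (y i)
    have h2 := congrFun hy.1.1 i
    simpa using h1.trans h2
  · have : ∀ B ∈ P.parts, B.image ⇑(x * y) = B.image ⇑x := by
      intro B hB
      rw [show ⇑(x * y) = ⇑x ∘ ⇑y from rfl, ← Finset.image_image, hy.2 B hB]
    rw [Finset.image_congr this]
    exact hx.1.2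


/-- The stabilizer `S_a^ρ` factors as the product
`S_a^ρ = X_a^ρ Y_a^ρ`, where `Y_a^ρ` is a normal subgroup of `S_a^ρ` (permuting only
within blocks) and `X_a^ρ` permutes whole blocks; moreover `X_a^ρ ∩ Y_a^ρ = {1}` and in
particular `|S_a^ρ| = |X_a^ρ| · |Y_a^ρ|`. -/
theorem stmt16 (c : Fin r → Fin k) (hc : Monotone c)
    (P : Finpartition (univ : Finset (Fin r))) :
    (∀ σ, σ ∈ stab c P ↔ ∃ x ∈ xGrp c P, ∃ y ∈ yGrp c P, σ = x * y) ∧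
    (xGrp c P ∩ yGrp c P = {1}) ∧
    (∀ σ ∈ stab c P, ∀ y ∈ yGrp c P, σ * y * σ⁻¹ ∈ yGrp c P) ∧
    Nat.card (stab c P) = Nat.card (xGrp c P) * Nat.card (yGrp c P) := by
  -- main factorization
  have factor : ∀ σ, σ ∈ stab c P → ∃ x ∈ xGrp c P, ∃ y ∈ yGrp c P, σ = x * y := by
    intro σ hσ
    have hσi := stab_inv hσ
    have h1 : ∀ B ∈ P.parts, B.image ⇑σ ∈ P.parts := fun B hB => stab_parts hσ hB
    have h1' : ∀ B ∈ P.parts, B.image ⇑σ⁻¹ ∈ P.parts := fun B hB => stab_parts hσi hB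
    set x : Equiv.Perm (Fin r) :=
      ⟨xFun P σ, xFun P σ⁻¹, xFun_leftInv P σ h1, by
        intro j
        have := xFun_leftInv P σ⁻¹ (by simpa using h1') j
        simpa using this⟩ with hxdef
    have hxcoe : ⇑x = xFun P σ := rfl
    have hxinv : ⇑x⁻¹ = xFun P σ⁻¹ := rfl
    have hximg : ∀ B ∈ P.parts, B.image ⇑x = B.image ⇑σ := by
      intro B hB; rw [hxcoe]; exact image_xFun P σ hB
    have hxstab : x ∈ stab c P := by
      constructor
      · funext i; exact c_xFun c hc P σ hσ.1 i
      · rw [Finset.image_congr (fun B hB => hximg B hB)]; exact hσ.2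
    have hxX : x ∈ xGrp c P :=
      ⟨hxstab, fun B hB => ((xFun_strictMonoOn P σ hB).monotoneOn)⟩
    refine ⟨x, hxX, x⁻¹ * σ, ?_, by group⟩
    have hyblocks : ∀ B ∈ P.parts, B.image ⇑(x⁻¹ * σ) = B := by
      intro B hB
      rw [show ⇑(x⁻¹ * σ) = ⇑x⁻¹ ∘ ⇑σ from rfl, ← Finset.image_image, hxinv,
        image_xFun P σ⁻¹ (h1 B hB), image_image_inv]
    refine ⟨⟨?_, fix_blocks_parts hyblocks⟩, hyblocks⟩
    · funext i
      have h2 : c (xFun P σ⁻¹ (σ i)) = c (σ i) := c_xFun c hc P σ⁻¹ hσi.1 (σ i)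
      have h3 := congrFun hσ.1 i
      exact h2.trans h3
  -- uniqueness of the factorization (injectivity)
  have uniq : ∀ x1 ∈ xGrp c P, ∀ x2 ∈ xGrp c P, ∀ y1 ∈ yGrp c P, ∀ y2 ∈ yGrp c P,
      x1 * y1 = x2 * y2 → x1 = x2 ∧ y1 = y2 := by
    intro x1 hx1 x2 hx2 y1 hy1 y2 hy2 heq
    have hximg : ∀ (x y : Equiv.Perm (Fin r)), y ∈ yGrp c P →
        ∀ B ∈ P.parts, B.image ⇑(x * y) = B.image ⇑x := by
      intro x y hy B hB
      rw [show ⇑(x * y) = ⇑x ∘ ⇑y from rfl, ← Finset.image_image, hy.2 B hB]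
    have hx12 : x1 = x2 := by
      apply Equiv.ext
      intro i
      have hB : P.part i ∈ P.parts := P.part_mem.2 (mem_univ i)
      have himg : (P.part i).image ⇑x1 = (P.part i).image ⇑x2 := by
        rw [← hximg x1 y1 hy1 _ hB, ← hximg x2 y2 hy2 _ hB, heq]
      exact eqOn_of_strictMonoOn (perm_strictMonoOn (hx1.2 _ hB))
        (perm_strictMonoOn (hx2.2 _ hB)) himg (P.mem_part (mem_univ i))
    exact ⟨hx12, by rw [hx12] at heq; exact mul_left_cancel heq⟩
  have one_mem_stab : (1 : Equiv.Perm (Fin r)) ∈ stab c P := by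
    constructor
    · funext i; rfl
    · have : ∀ B ∈ P.parts, B.image ⇑(1 : Equiv.Perm (Fin r)) = B := by
        intro B hB; simp [Equiv.Perm.coe_one]
      exact fix_blocks_parts this
  refine ⟨?_, ?_, ?_, ?_⟩
  · intro σ
    constructor
    · exact factor σ
    · rintro ⟨x, hx, y, hy, rfl⟩
      exact mul_mem_stab hx hy
  · ext σ
    simp only [Set.mem_inter_iff, Set.mem_singleton_iff]
    constructor
    · rintro ⟨hxm, hym⟩
      apply Equiv.ext
      intro i
      have hB : P.part i ∈ P.parts := P.part_mem.2 (mem_univ i)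
      have himg : (P.part i).image ⇑σ = (P.part i).image ⇑(1 : Equiv.Perm (Fin r)) := by
        rw [hym.2 _ hB]; simp [Equiv.Perm.coe_one]
      exact eqOn_of_strictMonoOn (perm_strictMonoOn (hxm.2 _ hB))
        (strictMonoOn_id) (by simpa using himg) (P.mem_part (mem_univ i))
    · rintro rfl
      exact ⟨⟨one_mem_stab, fun B hB => monotoneOn_id⟩,
        ⟨one_mem_stab, fun B hB => by simp [Equiv.Perm.coe_one]⟩⟩
  · intro σ hσ y hy
    have hσi := stab_inv hσ
    have hblocks : ∀ B ∈ P.parts, B.image ⇑(σ * y * σ⁻¹) = B := by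
      intro B hB
      have hC : B.image ⇑σ⁻¹ ∈ P.parts := stab_parts hσi hB
      rw [show ⇑(σ * y * σ⁻¹) = ⇑σ ∘ ⇑y ∘ ⇑σ⁻¹ from rfl]
      rw [← Function.comp_assoc, ← Finset.image_image, ← Finset.image_image,
        hy.2 _ hC]
      have := image_image_inv σ⁻¹ B
      rwa [inv_inv] at this
    refine ⟨⟨?_, fix_blocks_parts hblocks⟩, hblocks⟩
    funext i
    have h1 := congrFun hσi.1 i
    have h2 := congrFun hy.1.1 (σ⁻¹ i)
    have h3 := congrFun hσ.1 (y (σ⁻¹ i))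
    simpa using h3.trans (h2.trans h1)
  · have hbij : Function.Bijective (fun p : (xGrp c P) × (yGrp c P) =>
        (⟨p.1.1 * p.2.1, mul_mem_stab p.1.2 p.2.2⟩ : stab c P)) := by
      constructor
      · rintro ⟨⟨x1, hx1⟩, ⟨y1, hy1⟩⟩ ⟨⟨x2, hx2⟩, ⟨y2, hy2⟩⟩ h
        have : x1 * y1 = x2 * y2 := Subtype.ext_iff.1 h
        obtain ⟨h1, h2⟩ := uniq x1 hx1 x2 hx2 y1 hy1 y2 hy2 this
        simp [Prod.ext_iff, Subtype.ext_iff, h1, h2]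
      · rintro ⟨σ, hσ⟩
        obtain ⟨x, hx, y, hy, rfl⟩ := factor σ hσ
        exact ⟨⟨⟨x, hx⟩, ⟨y, hy⟩⟩, rfl⟩
    rw [← Nat.card_eq_of_bijective _ hbij, Nat.card_prod]
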